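/- arXiv:1903.04869 — 3 statements merged into one kernel-verified Lean document; each statement's English description precedes it below -/
import Mathlib

section
/- Let X₁,…,Xₙ be independent random variables taking values in a set 𝒳 and let f : 𝒳ⁿ → ℝ be measurable with f(X) square-integrable. Then Var(f(X)) = (1/2) Σ_{i=1}^n E[(f(X) − f(X^{(i)})) (f(X^{[i−1]}) − f(X^{[i]}))]. -/
open MeasureTheory ProbabilityTheory

open Classical in
/-- The random vector obtained from `X` by replacing the coordinates indexed by `A`
by the corresponding coordinates of the independent copy `X'`. -/
noncomputable def resample {Ω 𝒳 : Type*} {n : ℕ} (X X' : Fin n → Ω → 𝒳)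
    (A : Set (Fin n)) (ω : Ω) : Fin n → 𝒳 :=
  fun i => if i ∈ A then X' i ω else X i ω

open Classical in
noncomputable def chatSel {𝒳 : Type*} (n : ℕ) (A : Set (Fin n))
    (x : Fin n ⊕ Fin n → 𝒳) : Fin n → 𝒳 :=
  fun j => if j ∈ A then x (Sum.inr j) else x (Sum.inl j)

lemma measurable_chatSel {𝒳 : Type*} [MeasurableSpace 𝒳] {n : ℕ} (A : Set (Fin n)) :
    Measurable (chatSel (𝒳 := 𝒳) n A) := by
  refine measurable_pi_lambda _ fun j => ?_
  by_cases h : j ∈ A <;> simp only [chatSel, h, if_true, if_false] <;>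
    exact measurable_pi_apply _

lemma chatSel_resample {Ω 𝒳 : Type*} {n : ℕ} (X X' : Fin n → Ω → 𝒳)
    (A : Set (Fin n)) (ω : Ω) :
    resample X X' A ω = chatSel n A (fun k => Sum.elim X X' k ω) := by
  funext j
  by_cases h : j ∈ A <;> simp [resample, chatSel, h]

lemma chatSel_empty {𝒳 : Type*} {n : ℕ} (x : Fin n ⊕ Fin n → 𝒳) :
    chatSel n (∅ : Set (Fin n)) x = fun j => x (Sum.inl j) := by
  funext j; simp [chatSel]

lemma chatSel_swap {𝒳 : Type*} {n : ℕ} (i : Fin n) (A B : Set (Fin n))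
    (hB : ∀ j, j ∈ B ↔ (if j = i then j ∉ A else j ∈ A)) (x : Fin n ⊕ Fin n → 𝒳) :
    chatSel n A (fun k => x (Equiv.swap (Sum.inl i) (Sum.inr i) k)) = chatSel n B x := by
  funext j
  by_cases hj : j = i
  · subst hj
    by_cases hA : j ∈ A
    · have hBj : j ∉ B := by simp [hB j, hA]
      simp [chatSel, hA, hBj, Equiv.swap_apply_right]
    · have hBj : j ∈ B := by simp [hB j, hA]
      simp [chatSel, hA, hBj, Equiv.swap_apply_left]
  · have h1 : (Sum.inl j : Fin n ⊕ Fin n) ≠ Sum.inl i := by simpa using hj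
    have h2 : (Sum.inl j : Fin n ⊕ Fin n) ≠ Sum.inr i := by simp
    have h3 : (Sum.inr j : Fin n ⊕ Fin n) ≠ Sum.inl i := by simp
    have h4 : (Sum.inr j : Fin n ⊕ Fin n) ≠ Sum.inr i := by simpa using hj
    have hBj : j ∈ B ↔ j ∈ A := by simp [hB j, hj]
    by_cases hA : j ∈ A
    · simp [chatSel, hA, hBj.mpr hA, Equiv.swap_apply_of_ne_of_ne h3 h4]
    · have hBj' : j ∉ B := fun h => hA (hBj.mp h)
      simp [chatSel, hA, hBj', Equiv.swap_apply_of_ne_of_ne h1 h2]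

lemma chat_l2_mul_integrable {α : Type*} [MeasurableSpace α] {μ : Measure α}
    {g h : α → ℝ} (hg : MemLp g 2 μ) (hh : MemLp h 2 μ) :
    Integrable (fun x => g x * h x) μ := by
  rw [← memLp_one_iff_integrable]
  have := hh.smul (𝕜 := ℝ) hg (p := 2) (q := 2) (r := 1)
  exact this


/-- Chatterjee's variance formula: if `X₁, …, Xₙ` are independent random variables and
`X'` is an independent copy of `X`, then
`Var(f(X)) = (1/2) ∑ᵢ E[(f(X) − f(X^{(i)})) (f(X^{[i−1]}) − f(X^{[i]}))]`,
where (in 1-based notation) `X^{(i)}` resamples the `i`-th coordinate and `X^{[i]}`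
resamples the first `i` coordinates. -/
theorem chatterjee_variance_formula
    {Ω : Type*} [MeasurableSpace Ω] (P : Measure Ω) [IsProbabilityMeasure P]
    {𝒳 : Type*} [MeasurableSpace 𝒳] (n : ℕ)
    (X X' : Fin n → Ω → 𝒳)
    (hmeas : ∀ i, Measurable (X i)) (hmeas' : ∀ i, Measurable (X' i))
    (hindep : iIndepFun (Sum.elim X X' : Fin n ⊕ Fin n → Ω → 𝒳) P)
    (hid : ∀ i, IdentDistrib (X' i) (X i) P P)
    (f : (Fin n → 𝒳) → ℝ) (hf : Measurable f)
    (hL2 : MemLp (fun ω => f (fun i => X i ω)) 2 P) :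
    variance (fun ω => f (fun i => X i ω)) P
      = (1 / 2) * ∑ i : Fin n, ∫ ω,
          (f (fun j => X j ω) - f (resample X X' {i} ω)) *
            (f (resample X X' {j | (j : ℕ) < (i : ℕ)} ω) -
              f (resample X X' {j | (j : ℕ) ≤ (i : ℕ)} ω)) ∂P := by
  classical
  -- the combined random vector and the product measure
  set Z : Ω → (Fin n ⊕ Fin n → 𝒳) := fun ω k => Sum.elim X X' k ω with hZ
  have hmeasElim : ∀ k, Measurable (Sum.elim X X' k : Ω → 𝒳) := by
    rintro (i | i)
    · exact hmeas i
    · exact hmeas' i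
  have hZmeas : Measurable Z := measurable_pi_lambda _ hmeasElim
  set m : Fin n ⊕ Fin n → Measure 𝒳 := fun k => P.map (Sum.elim X X' k) with hm
  haveI hmprob : ∀ k, IsProbabilityMeasure (m k) :=
    fun k => Measure.isProbabilityMeasure_map (hmeasElim k).aemeasurable
  set ν : Fin n → Measure 𝒳 := fun j => P.map (X j) with hν
  haveI hνprob : ∀ j, IsProbabilityMeasure (ν j) :=
    fun j => Measure.isProbabilityMeasure_map (hmeas j).aemeasurable
  have hminl : ∀ j, m (Sum.inl j) = ν j := fun j => rfl
  have hminr : ∀ j, m (Sum.inr j) = ν j := fun j => (hid j).map_eq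
  set μ : Measure (Fin n ⊕ Fin n → 𝒳) := Measure.pi m with hμ
  -- the law of Z is the product measure
  have hmap : P.map Z = μ := by
    refine (Measure.pi_eq (μ := m) fun s hs => ?_).symm
    rw [Measure.map_apply hZmeas (MeasurableSet.univ_pi hs)]
    have hpre : Z ⁻¹' Set.univ.pi s = ⋂ k ∈ Finset.univ, (Sum.elim X X' k) ⁻¹' s k := by
      ext ω; simp [Set.mem_pi, Z]
    rw [hpre, hindep.measure_inter_preimage_eq_mul Finset.univ (fun k _ => hs k)]
    exact Finset.prod_congr rfl fun k _ =>
      (Measure.map_apply (hmeasElim k) (hs k)).symm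
  -- marginal law: every selection has law `Measure.pi ν`
  have hmarg : ∀ A : Set (Fin n), μ.map (chatSel n A) = Measure.pi ν := by
    intro A
    refine (Measure.pi_eq (μ := ν) fun s hs => ?_).symm
    rw [Measure.map_apply (measurable_chatSel A) (MeasurableSet.univ_pi hs)]
    have hpre : chatSel n A ⁻¹' Set.univ.pi s =
        Set.univ.pi (fun k => Sum.elim (fun j => if j ∈ A then Set.univ else s j)
          (fun j => if j ∈ A then s j else Set.univ) k) := by
      ext x
      simp only [Set.mem_preimage, Set.mem_pi, Set.mem_univ, true_implies]
      constructor
      · intro h k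
        rcases k with j | j
        · by_cases hA : j ∈ A
          · simp [hA]
          · have := h j; simp only [chatSel, hA, if_false] at this
            simpa [hA] using this
        · by_cases hA : j ∈ A
          · have := h j; simp only [chatSel, hA, if_true] at this
            simpa [hA] using this
          · simp [hA]
      · intro h j
        by_cases hA : j ∈ A
        · have := h (Sum.inr j); simp only [Sum.elim_inr, hA, if_true] at this
          simp [chatSel, hA, this]
        · have := h (Sum.inl j); simp only [Sum.elim_inl, hA, if_false] at this
          simp [chatSel, hA, this]
    rw [hpre, Measure.pi_pi, Fintype.prod_sum_type, ← Finset.prod_mul_distrib]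
    refine Finset.prod_congr rfl fun j _ => ?_
    by_cases hA : j ∈ A
    · simp [hA, hminr j, hminl j]
    · simp [hA, hminr j, hminl j]
  -- the measurable selections of f
  set g : Set (Fin n) → (Fin n ⊕ Fin n → 𝒳) → ℝ := fun A x => f (chatSel n A x) with hg
  have hgmeas : ∀ A, Measurable (g A) := fun A => hf.comp (measurable_chatSel A)
  -- f is L2 for the law of X
  have hXlaw : P.map (fun ω j => X j ω) = Measure.pi ν := by
    have : (fun ω j => X j ω) = chatSel n (∅ : Set (Fin n)) ∘ Z := by
      funext ω
      rw [Function.comp_apply, chatSel_empty]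
      rfl
    rw [this, ← Measure.map_map (measurable_chatSel _) hZmeas, hmap, hmarg]
  have hfL2 : MemLp f 2 (Measure.pi ν) := by
    rw [← hXlaw]
    refine (memLp_map_measure_iff ?_ (measurable_pi_lambda _ hmeas).aemeasurable).mpr hL2
    rw [hXlaw]; exact hf.aestronglyMeasurable
  -- each g A is L2 w.r.t. μ
  have hgL2 : ∀ A, MemLp (g A) 2 μ := by
    intro A
    have h1 : AEStronglyMeasurable f (μ.map (chatSel n A)) := hf.aestronglyMeasurable
    have := (memLp_map_measure_iff h1 (measurable_chatSel A).aemeasurable).mp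
      (by rw [hmarg]; exact hfL2)
    exact this
  have hInt : ∀ A B, Integrable (fun x => g A x * g B x) μ :=
    fun A B => chat_l2_mul_integrable (hgL2 A) (hgL2 B)
  -- transfer integrals from P to μ
  have key : ∀ (G : (Fin n ⊕ Fin n → 𝒳) → ℝ), Measurable G →
      ∫ ω, G (Z ω) ∂P = ∫ x, G x ∂μ := by
    intro G hG
    rw [← hmap, integral_map hZmeas.aemeasurable hG.aestronglyMeasurable]
  -- swap invariance of the product measure
  have hswap : ∀ (i : Fin n) (G : (Fin n ⊕ Fin n → 𝒳) → ℝ), Measurable G →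
      ∫ x, G (fun k => x (Equiv.swap (Sum.inl i) (Sum.inr i) k)) ∂μ = ∫ x, G x ∂μ := by
    intro i G hG
    set τ : (Fin n ⊕ Fin n) ≃ (Fin n ⊕ Fin n) := Equiv.swap (Sum.inl i) (Sum.inr i) with hτ
    have hmτ : (fun k => m (τ k)) = m := by
      funext k
      rcases k with j | j
      · by_cases hj : j = i
        · subst hj
          rw [hτ, Equiv.swap_apply_left, hminr, hminl]
        · rw [hτ, Equiv.swap_apply_of_ne_of_ne (by simpa using hj) (by simp)]
      · by_cases hj : j = i
        · subst hj
          rw [hτ, Equiv.swap_apply_right, hminr, hminl]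
        · rw [hτ, Equiv.swap_apply_of_ne_of_ne (by simp) (by simpa using hj)]
    set Se := MeasurableEquiv.piCongrLeft (fun _ : Fin n ⊕ Fin n => 𝒳) τ with hSedef
    have hMP : MeasurePreserving Se μ μ := by
      have := MeasureTheory.measurePreserving_piCongrLeft m τ
      rwa [hmτ] at this
    have hSe : ∀ (x : Fin n ⊕ Fin n → 𝒳), Se x = fun k => x (τ k) := by
      intro x; funext k
      conv_lhs => rw [show k = τ (τ k) from (Equiv.swap_apply_self _ _ k).symm]
      rw [hSedef, MeasurableEquiv.coe_piCongrLeft]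
      exact Equiv.piCongrLeft_apply_apply (fun _ : Fin n ⊕ Fin n => 𝒳) τ x (τ k)
    have hcomp := hMP.integral_comp Se.measurableEmbedding G
    rw [← hcomp]
    exact integral_congr_ae (Filter.Eventually.of_forall fun x => by simp only [hSe])
  -- endpoint: full resampling factorizes
  have hU : ∀ x : Fin n ⊕ Fin n → 𝒳,
      chatSel n {j : Fin n | (j : ℕ) < n} x = fun j => x (Sum.inr j) := by
    intro x; funext j; simp [chatSel, j.isLt]
  have hend : ∫ x, g ∅ x * g {j : Fin n | (j : ℕ) < n} x ∂μ = (∫ x, g ∅ x ∂μ) ^ 2 := by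
    have hIν : ∫ x, g ∅ x ∂μ = ∫ y, f y ∂(Measure.pi ν) := by
      rw [← hmarg ∅, integral_map (measurable_chatSel _).aemeasurable hf.aestronglyMeasurable]
    have hψ := MeasureTheory.measurePreserving_sumPiEquivProdPi_symm
      (X := fun _ : Fin n ⊕ Fin n => 𝒳) m
    have hcomp := hψ.integral_comp (MeasurableEquiv.measurableEmbedding _)
      (fun x => g ∅ x * g {j : Fin n | (j : ℕ) < n} x)
    have hfst : ∀ p : (Fin n → 𝒳) × (Fin n → 𝒳),
        chatSel n ∅ ((MeasurableEquiv.sumPiEquivProdPi (fun _ : Fin n ⊕ Fin n => 𝒳)).symm p)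
          = p.1 := by
      intro p
      rw [chatSel_empty]
      funext j
      rw [MeasurableEquiv.coe_sumPiEquivProdPi_symm]
      rfl
    have hsnd : ∀ p : (Fin n → 𝒳) × (Fin n → 𝒳),
        chatSel n {j : Fin n | (j : ℕ) < n}
          ((MeasurableEquiv.sumPiEquivProdPi (fun _ : Fin n ⊕ Fin n => 𝒳)).symm p) = p.2 := by
      intro p
      rw [hU]
      funext j
      rw [MeasurableEquiv.coe_sumPiEquivProdPi_symm]
      rfl
    have hinl : (Measure.pi fun j => m (Sum.inl j)) = Measure.pi ν := by
      exact congrArg Measure.pi (funext hminl)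
    have hinr : (Measure.pi fun j => m (Sum.inr j)) = Measure.pi ν := by
      exact congrArg Measure.pi (funext hminr)
    calc ∫ x, g ∅ x * g {j : Fin n | (j : ℕ) < n} x ∂μ
        = ∫ p, f p.1 * f p.2
            ∂((Measure.pi fun j => m (Sum.inl j)).prod (Measure.pi fun j => m (Sum.inr j))) := by
          rw [← hcomp]
          refine integral_congr_ae (Filter.Eventually.of_forall fun p => ?_)
          simp only [hg, hfst p, hsnd p]
      _ = (∫ y, f y ∂(Measure.pi ν)) * (∫ y, f y ∂(Measure.pi ν)) := by
          rw [hinl, hinr, integral_prod_mul]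
      _ = (∫ x, g ∅ x ∂μ) ^ 2 := by rw [hIν, sq]
  -- the telescoping quantities
  set F : ℕ → ℝ := fun k => ∫ x, g ∅ x * g {j : Fin n | (j : ℕ) < k} x ∂μ with hF
  have hfX : ∀ ω, f (fun i => X i ω) = g ∅ (Z ω) := by
    intro ω
    simp only [hg]
    rw [chatSel_empty]
    rfl
  -- step 1 : variance = F 0 - F n
  have hA0 : {j : Fin n | (j : ℕ) < 0} = (∅ : Set (Fin n)) := by ext j; simp
  have hvar : variance (fun ω => f (fun i => X i ω)) P = F 0 - F n := by
    rw [variance_eq_sub hL2]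
    have h1 : P[(fun ω => f (fun i => X i ω)) ^ 2] = F 0 := by
      have : ((fun ω => f (fun i => X i ω)) ^ 2) =
          fun ω => (fun x => g ∅ x * g ∅ x) (Z ω) := by
        funext ω
        simp [hfX ω, sq]
      rw [this, key (fun x => g ∅ x * g ∅ x) ((hgmeas ∅).mul (hgmeas ∅))]
      simp only [hF]
      rw [hA0]
    have h2 : P[fun ω => f (fun i => X i ω)] = ∫ x, g ∅ x ∂μ := by
      have : (fun ω => f (fun i => X i ω)) = fun ω => g ∅ (Z ω) := funext hfX
      rw [this, key _ (hgmeas ∅)]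
    rw [h1, h2]
    have hFn : F n = (∫ x, g ∅ x ∂μ) ^ 2 := by
      simp only [hF]; exact hend
    rw [hFn]
  -- step 2 : per-index identity
  have hT : ∀ i : Fin n, (∫ ω,
      (f (fun j => X j ω) - f (resample X X' {i} ω)) *
        (f (resample X X' {j | (j : ℕ) < (i : ℕ)} ω) -
          f (resample X X' {j | (j : ℕ) ≤ (i : ℕ)} ω)) ∂P)
      = 2 * (F (i : ℕ) - F ((i : ℕ) + 1)) := by
    intro i
    set Li : Set (Fin n) := {j | (j : ℕ) < (i : ℕ)} with hLi
    set Bi : Set (Fin n) := {j | (j : ℕ) ≤ (i : ℕ)} with hBi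
    have hBiA : Bi = {j : Fin n | (j : ℕ) < (i : ℕ) + 1} := by
      ext j; simp [hBi, Nat.lt_succ_iff]
    -- transfer to μ
    have htrans : (∫ ω,
        (f (fun j => X j ω) - f (resample X X' {i} ω)) *
          (f (resample X X' Li ω) - f (resample X X' Bi ω)) ∂P)
        = ∫ x, (g ∅ x - g {i} x) * (g Li x - g Bi x) ∂μ := by
      have heq : (fun ω => (f (fun j => X j ω) - f (resample X X' {i} ω)) *
          (f (resample X X' Li ω) - f (resample X X' Bi ω)))
          = fun ω => (fun x => (g ∅ x - g {i} x) * (g Li x - g Bi x)) (Z ω) := by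
        funext ω
        rw [hfX ω, chatSel_resample X X' {i} ω, chatSel_resample X X' Li ω,
          chatSel_resample X X' Bi ω]
      rw [heq, key (fun x => (g ∅ x - g {i} x) * (g Li x - g Bi x)) (((hgmeas ∅).sub (hgmeas {i})).mul ((hgmeas Li).sub (hgmeas Bi)))]
    rw [htrans]
    -- swap identities
    have hset1 : ∀ j : Fin n, j ∈ (∅ : Set (Fin n)) ↔
        (if j = i then j ∉ ({i} : Set (Fin n)) else j ∈ ({i} : Set (Fin n))) := by
      intro j; by_cases hj : j = i <;> simp [hj]
    have hset2 : ∀ j : Fin n, j ∈ Li ↔ (if j = i then j ∉ Bi else j ∈ Bi) := by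
      intro j
      by_cases hj : j = i
      · subst hj; simp [hLi, hBi]
      · have hval : (j : ℕ) ≠ (i : ℕ) := fun h => hj (Fin.ext h)
        simp only [hj, if_false, hLi, hBi, Set.mem_setOf_eq]
        omega
    have hswap1 : ∫ x, g ∅ x * g Li x ∂μ = ∫ x, g {i} x * g Bi x ∂μ := by
      rw [← hswap i (fun x => g {i} x * g Bi x) ((hgmeas _).mul (hgmeas _))]
      refine integral_congr_ae (Filter.Eventually.of_forall fun x => ?_)
      simp only [hg]
      rw [chatSel_swap i {i} ∅ hset1 x, chatSel_swap i Bi Li hset2 x, chatSel_empty]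
    have hswap2 : ∫ x, g ∅ x * g Bi x ∂μ = ∫ x, g {i} x * g Li x ∂μ := by
      have hset2' : ∀ j : Fin n, j ∈ Bi ↔ (if j = i then j ∉ Li else j ∈ Li) := by
        intro j
        by_cases hj : j = i
        · subst hj; simp [hLi, hBi]
        · have hval : (j : ℕ) ≠ (i : ℕ) := fun h => hj (Fin.ext h)
          simp only [hj, if_false, hLi, hBi, Set.mem_setOf_eq]
          omega
      rw [← hswap i (fun x => g {i} x * g Li x) ((hgmeas _).mul (hgmeas _))]
      refine integral_congr_ae (Filter.Eventually.of_forall fun x => ?_)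
      simp only [hg]
      rw [chatSel_swap i {i} ∅ hset1 x, chatSel_swap i Li Bi hset2' x, chatSel_empty]
    -- expand
    have hexp : (fun x => (g ∅ x - g {i} x) * (g Li x - g Bi x))
        = fun x => (g ∅ x * g Li x - g ∅ x * g Bi x)
            - (g {i} x * g Li x - g {i} x * g Bi x) := by
      funext x; ring
    have I1 : Integrable (fun x => g ∅ x * g Li x - g ∅ x * g Bi x) μ :=
      (hInt ∅ Li).sub (hInt ∅ Bi)
    have I2 : Integrable (fun x => g {i} x * g Li x - g {i} x * g Bi x) μ :=
      (hInt {i} Li).sub (hInt {i} Bi)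
    rw [hexp, integral_sub I1 I2, integral_sub (hInt ∅ Li) (hInt ∅ Bi),
      integral_sub (hInt {i} Li) (hInt {i} Bi), ← hswap2, ← hswap1]
    have hFi : F (i : ℕ) = ∫ x, g ∅ x * g Li x ∂μ := rfl
    have hFi1 : F ((i : ℕ) + 1) = ∫ x, g ∅ x * g Bi x ∂μ := by
      rw [hBiA]
    rw [hFi, hFi1]
    ring
  -- assemble
  calc variance (fun ω => f (fun i => X i ω)) P
      = F 0 - F n := hvar
    _ = ∑ k ∈ Finset.range n, (F k - F (k + 1)) := (Finset.sum_range_sub' F n).symm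
    _ = ∑ i : Fin n, (F (i : ℕ) - F ((i : ℕ) + 1)) :=
        (Fin.sum_univ_eq_sum_range (fun k => F k - F (k + 1)) n).symm
    _ = (1 / 2) * ∑ i : Fin n, ∫ ω,
          (f (fun j => X j ω) - f (resample X X' {i} ω)) *
            (f (resample X X' {j | (j : ℕ) < (i : ℕ)} ω) -
              f (resample X X' {j | (j : ℕ) ≤ (i : ℕ)} ω)) ∂P := by
        rw [Finset.mul_sum]
        refine Finset.sum_congr rfl fun i _ => ?_
        rw [hT i]
        ring
end

section
/- Let X₁,…,Xₙ be independent random variables taking values in a set 𝒳 and let f : 𝒳ⁿ → ℝ be measurable with f(X) square-integrable. Then E[(f(X) − f(X^{(1)})) (f(X^{[n]∖{1}}) − f(X^{[n]}))] = 2 E[g(X₁)²] − 2 (E f(X))², where g(X₁) = E[f(X) | X₁]; in particular this quantity is nonnegative. -/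
open MeasureTheory ProbabilityTheory
open scoped ENNReal NNReal

private lemma abs_prod_le_sum_sq (A B C D : ℝ) :
    |(A - B) * (C - D)| ≤ A ^ 2 + B ^ 2 + C ^ 2 + D ^ 2 := by
  rw [abs_le]
  constructor <;> nlinarith [sq_nonneg (A - B + (C - D)), sq_nonneg (A - B - (C - D)),
    sq_nonneg (A + B), sq_nonneg (A - B), sq_nonneg (C + D), sq_nonneg (C - D)]

/-- The joint law of finitely many independent random variables is the product measure. -/
private lemma map_fun_eq_pi {ι Ω 𝒳 : Type*} [Fintype ι] [MeasurableSpace Ω]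
    [MeasurableSpace 𝒳] (P : Measure Ω) [IsProbabilityMeasure P] (g : ι → Ω → 𝒳)
    (hg : ∀ i, Measurable (g i)) (h : iIndepFun g P) :
    P.map (fun ω i => g i ω) = Measure.pi (fun i => P.map (g i)) := by
  haveI : ∀ i, IsProbabilityMeasure (P.map (g i)) :=
    fun i => Measure.isProbabilityMeasure_map (hg i).aemeasurable
  refine (Measure.pi_eq fun s hs => ?_).symm
  rw [Measure.map_apply (measurable_pi_lambda _ hg) (MeasurableSet.univ_pi hs)]
  have hpre : (fun ω i => g i ω) ⁻¹' Set.univ.pi s = ⋂ i, g i ⁻¹' s i := by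
    ext ω; simp [Set.mem_univ_pi]
  rw [hpre, h.meas_iInter fun i => ⟨s i, hs i, rfl⟩]
  exact Finset.prod_congr rfl fun i _ => (Measure.map_apply (hg i) (hs i)).symm

private lemma measurePreserving_fst' {α β : Type*} [MeasurableSpace α] [MeasurableSpace β]
    (μ : Measure α) (ν : Measure β) [IsProbabilityMeasure ν] :
    MeasurePreserving Prod.fst (μ.prod ν) μ :=
  ⟨measurable_fst, by simp [Measure.map_fst_prod]⟩

private lemma measurePreserving_snd' {α β : Type*} [MeasurableSpace α] [MeasurableSpace β]
    (μ : Measure α) (ν : Measure β) [IsProbabilityMeasure μ] [SFinite ν] :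
    MeasurePreserving Prod.snd (μ.prod ν) ν :=
  ⟨measurable_snd, by rw [Measure.map_snd_prod]; simp⟩

private lemma integrable_mul_memL2 {α : Type*} [MeasurableSpace α] {μ : Measure α}
    {f g : α → ℝ} (hf : MemLp f 2 μ) (hg : MemLp g 2 μ) :
    Integrable (fun x => f x * g x) μ := by
  have h : MemLp (f • g) 1 μ :=
    MemLp.smul hg hf (hpqr := ⟨by rw [inv_one, ← one_div, ENNReal.add_halves]⟩)
  exact memLp_one_iff_integrable.mp h

/-- The map `a ↦ ∫ y, F (a, y) ∂νr` is in `L²` when `F` is (probability measures). -/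
private lemma memL2_integral_right {𝒳 R : Type*} [MeasurableSpace 𝒳] [MeasurableSpace R]
    (ν₀ : Measure 𝒳) (νr : Measure R) [IsProbabilityMeasure ν₀] [IsProbabilityMeasure νr]
    {F : 𝒳 × R → ℝ} (hFm : Measurable F) (hF2 : MemLp F 2 (ν₀.prod νr)) :
    MemLp (fun a => ∫ y, F (a, y) ∂νr) 2 ν₀ := by
  have gsm : StronglyMeasurable fun a => ∫ y, F (a, y) ∂νr :=
    hFm.stronglyMeasurable.integral_prod_right'
  refine ⟨gsm.aestronglyMeasurable, ?_⟩
  have h2 : (2 : ℝ≥0∞).toReal = 2 := by simp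
  rw [eLpNorm_eq_lintegral_rpow_enorm_toReal two_ne_zero ENNReal.ofNat_ne_top, h2]
  refine ENNReal.rpow_lt_top_of_nonneg (by norm_num) ?_
  have key : ∀ a : 𝒳, (‖∫ y, F (a, y) ∂νr‖₊ : ℝ≥0∞) ^ (2 : ℝ)
      ≤ ∫⁻ y, (‖F (a, y)‖₊ : ℝ≥0∞) ^ (2 : ℝ) ∂νr := by
    intro a
    have h1 : (‖∫ y, F (a, y) ∂νr‖₊ : ℝ≥0∞) ≤ ∫⁻ y, (‖F (a, y)‖₊ : ℝ≥0∞) ∂νr :=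
      enorm_integral_le_lintegral_enorm _
    have hmeasa : Measurable fun y => (‖F (a, y)‖₊ : ℝ≥0∞) :=
      (hFm.comp measurable_prodMk_left).enorm
    have hcs : ∫⁻ y, (‖F (a, y)‖₊ : ℝ≥0∞) ∂νr
        ≤ (∫⁻ y, (‖F (a, y)‖₊ : ℝ≥0∞) ^ (2 : ℝ) ∂νr) ^ (1 / 2 : ℝ) := by
      have hconj : Real.HolderConjugate 2 2 := Real.HolderConjugate.two_two
      have := ENNReal.lintegral_mul_le_Lp_mul_Lq νr hconj hmeasa.aemeasurable
        (aemeasurable_const (b := (1 : ℝ≥0∞)))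
      simpa using this
    calc (‖∫ y, F (a, y) ∂νr‖₊ : ℝ≥0∞) ^ (2 : ℝ)
        ≤ (∫⁻ y, (‖F (a, y)‖₊ : ℝ≥0∞) ∂νr) ^ (2 : ℝ) :=
          ENNReal.rpow_le_rpow h1 (by norm_num)
      _ ≤ ((∫⁻ y, (‖F (a, y)‖₊ : ℝ≥0∞) ^ (2 : ℝ) ∂νr) ^ (1 / 2 : ℝ)) ^ (2 : ℝ) :=
          ENNReal.rpow_le_rpow hcs (by norm_num)
      _ = ∫⁻ y, (‖F (a, y)‖₊ : ℝ≥0∞) ^ (2 : ℝ) ∂νr := by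
          rw [← ENNReal.rpow_mul]; norm_num
  have hbig : ∫⁻ a, (‖∫ y, F (a, y) ∂νr‖₊ : ℝ≥0∞) ^ (2 : ℝ) ∂ν₀
      ≤ ∫⁻ z, (‖F z‖₊ : ℝ≥0∞) ^ (2 : ℝ) ∂(ν₀.prod νr) := by
    calc ∫⁻ a, (‖∫ y, F (a, y) ∂νr‖₊ : ℝ≥0∞) ^ (2 : ℝ) ∂ν₀
        ≤ ∫⁻ a, ∫⁻ y, (‖F (a, y)‖₊ : ℝ≥0∞) ^ (2 : ℝ) ∂νr ∂ν₀ := lintegral_mono key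
      _ = ∫⁻ z, (‖F z‖₊ : ℝ≥0∞) ^ (2 : ℝ) ∂(ν₀.prod νr) :=
          (lintegral_prod _ (hFm.enorm.pow_const _).aemeasurable).symm
  refine (lt_of_le_of_lt hbig ?_).ne
  have hF2' := hF2.2
  rw [eLpNorm_eq_lintegral_rpow_enorm_toReal two_ne_zero ENNReal.ofNat_ne_top, h2] at hF2'
  exact (ENNReal.rpow_lt_top_iff_of_pos (by norm_num : (0:ℝ) < 1/2)).mp hF2'

/-- The core identity, over an abstract product probability space. -/
private theorem main_product_identity {𝒳 R : Type*} [MeasurableSpace 𝒳] [MeasurableSpace R]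
    (ν₀ : Measure 𝒳) (νr : Measure R) [IsProbabilityMeasure ν₀] [IsProbabilityMeasure νr]
    (F : 𝒳 × R → ℝ) (hFm : Measurable F) (hF2 : MemLp F 2 (ν₀.prod νr)) :
    (∫ w, (F (w.1.1, w.2.1) - F (w.1.2, w.2.1)) * (F (w.1.1, w.2.2) - F (w.1.2, w.2.2))
        ∂((ν₀.prod ν₀).prod (νr.prod νr))
      = 2 * (∫ a, (∫ y, F (a, y) ∂νr) ^ 2 ∂ν₀) - 2 * (∫ a, ∫ y, F (a, y) ∂νr ∂ν₀) ^ 2) ∧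
    0 ≤ ∫ w, (F (w.1.1, w.2.1) - F (w.1.2, w.2.1)) * (F (w.1.1, w.2.2) - F (w.1.2, w.2.2))
        ∂((ν₀.prod ν₀).prod (νr.prod νr)) := by
  set g : 𝒳 → ℝ := fun a => ∫ y, F (a, y) ∂νr with hg
  have gsm : StronglyMeasurable g := hFm.stronglyMeasurable.integral_prod_right'
  have hF1 : Integrable F (ν₀.prod νr) := hF2.integrable one_le_two
  have hFsq : Integrable (fun z => F z ^ 2) (ν₀.prod νr) :=
    (memLp_two_iff_integrable_sq hF2.aestronglyMeasurable).mp hF2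
  have hg2 : MemLp g 2 ν₀ := memL2_integral_right ν₀ νr hFm hF2
  have hgsq : Integrable (fun a => g a ^ 2) ν₀ :=
    (memLp_two_iff_integrable_sq gsm.aestronglyMeasurable).mp hg2
  -- measure preserving projections
  have mpff : MeasurePreserving (Prod.map (Prod.fst : 𝒳 × 𝒳 → 𝒳) (Prod.fst : R × R → R))
      ((ν₀.prod ν₀).prod (νr.prod νr)) (ν₀.prod νr) :=
    (measurePreserving_fst' ν₀ ν₀).prod (measurePreserving_fst' νr νr)
  have mpfs : MeasurePreserving (Prod.map (Prod.fst : 𝒳 × 𝒳 → 𝒳) (Prod.snd : R × R → R))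
      ((ν₀.prod ν₀).prod (νr.prod νr)) (ν₀.prod νr) :=
    (measurePreserving_fst' ν₀ ν₀).prod (measurePreserving_snd' νr νr)
  have mpsf : MeasurePreserving (Prod.map (Prod.snd : 𝒳 × 𝒳 → 𝒳) (Prod.fst : R × R → R))
      ((ν₀.prod ν₀).prod (νr.prod νr)) (ν₀.prod νr) :=
    (measurePreserving_snd' ν₀ ν₀).prod (measurePreserving_fst' νr νr)
  have mpss : MeasurePreserving (Prod.map (Prod.snd : 𝒳 × 𝒳 → 𝒳) (Prod.snd : R × R → R))
      ((ν₀.prod ν₀).prod (νr.prod νr)) (ν₀.prod νr) :=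
    (measurePreserving_snd' ν₀ ν₀).prod (measurePreserving_snd' νr νr)
  have hFsqsm : AEStronglyMeasurable (fun z => F z ^ 2) (ν₀.prod νr) :=
    (hFm.pow_const 2).aestronglyMeasurable
  have i11 : Integrable (fun w : (𝒳 × 𝒳) × (R × R) => F (w.1.1, w.2.1) ^ 2)
      ((ν₀.prod ν₀).prod (νr.prod νr)) := (mpff.integrable_comp hFsqsm).mpr hFsq
  have i21 : Integrable (fun w : (𝒳 × 𝒳) × (R × R) => F (w.1.2, w.2.1) ^ 2)
      ((ν₀.prod ν₀).prod (νr.prod νr)) := (mpsf.integrable_comp hFsqsm).mpr hFsq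
  have i12 : Integrable (fun w : (𝒳 × 𝒳) × (R × R) => F (w.1.1, w.2.2) ^ 2)
      ((ν₀.prod ν₀).prod (νr.prod νr)) := (mpfs.integrable_comp hFsqsm).mpr hFsq
  have i22 : Integrable (fun w : (𝒳 × 𝒳) × (R × R) => F (w.1.2, w.2.2) ^ 2)
      ((ν₀.prod ν₀).prod (νr.prod νr)) := (mpss.integrable_comp hFsqsm).mpr hFsq
  have hHm : Measurable (fun w : (𝒳 × 𝒳) × (R × R) =>
      (F (w.1.1, w.2.1) - F (w.1.2, w.2.1)) * (F (w.1.1, w.2.2) - F (w.1.2, w.2.2))) := by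
    have m11 : Measurable fun w : (𝒳 × 𝒳) × (R × R) => F (w.1.1, w.2.1) :=
      hFm.comp ((measurable_fst.fst).prodMk (measurable_snd.fst))
    have m21 : Measurable fun w : (𝒳 × 𝒳) × (R × R) => F (w.1.2, w.2.1) :=
      hFm.comp ((measurable_fst.snd).prodMk (measurable_snd.fst))
    have m12 : Measurable fun w : (𝒳 × 𝒳) × (R × R) => F (w.1.1, w.2.2) :=
      hFm.comp ((measurable_fst.fst).prodMk (measurable_snd.snd))
    have m22 : Measurable fun w : (𝒳 × 𝒳) × (R × R) => F (w.1.2, w.2.2) :=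
      hFm.comp ((measurable_fst.snd).prodMk (measurable_snd.snd))
    exact (m11.sub m21).mul (m12.sub m22)
  have hHint : Integrable (fun w : (𝒳 × 𝒳) × (R × R) =>
      (F (w.1.1, w.2.1) - F (w.1.2, w.2.1)) * (F (w.1.1, w.2.2) - F (w.1.2, w.2.2)))
      ((ν₀.prod ν₀).prod (νr.prod νr)) := by
    refine Integrable.mono' (((i11.add i21).add i12).add i22) hHm.aestronglyMeasurable
      (Filter.Eventually.of_forall fun w => ?_)
    have := abs_prod_le_sum_sq (F (w.1.1, w.2.1)) (F (w.1.2, w.2.1))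
      (F (w.1.1, w.2.2)) (F (w.1.2, w.2.2))
    simpa [Real.norm_eq_abs, abs_mul] using this
  -- Fubini: inner integral
  have hinner : ∀ᵐ p ∂(ν₀.prod ν₀),
      (∫ q, (F (p.1, q.1) - F (p.2, q.1)) * (F (p.1, q.2) - F (p.2, q.2)) ∂(νr.prod νr))
        = (g p.1 - g p.2) ^ 2 := by
    have hae : ∀ᵐ a ∂ν₀, Integrable (fun y => F (a, y)) νr := hF1.prod_right_ae
    have h1 : ∀ᵐ p ∂(ν₀.prod ν₀), Integrable (fun y => F (p.1, y)) νr :=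
      ae_of_ae_map measurable_fst.aemeasurable
        (by rwa [(measurePreserving_fst' ν₀ ν₀).map_eq])
    have h2 : ∀ᵐ p ∂(ν₀.prod ν₀), Integrable (fun y => F (p.2, y)) νr :=
      ae_of_ae_map measurable_snd.aemeasurable
        (by rwa [(measurePreserving_snd' ν₀ ν₀).map_eq])
    filter_upwards [h1, h2] with p hp1 hp2
    have hpm := integral_prod_mul (μ := νr) (ν := νr)
      (fun y => F (p.1, y) - F (p.2, y)) (fun y => F (p.1, y) - F (p.2, y))
    rw [hpm, integral_sub hp1 hp2]
    simp only [hg]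
    ring
  have EF : ∫ w, (F (w.1.1, w.2.1) - F (w.1.2, w.2.1)) * (F (w.1.1, w.2.2) - F (w.1.2, w.2.2))
        ∂((ν₀.prod ν₀).prod (νr.prod νr))
      = ∫ p, (g p.1 - g p.2) ^ 2 ∂(ν₀.prod ν₀) := by
    rw [integral_prod _ hHint]
    exact integral_congr_ae hinner
  refine ⟨?_, ?_⟩
  · rw [EF]
    have hexp : (fun p : 𝒳 × 𝒳 => (g p.1 - g p.2) ^ 2)
        = fun p => g p.1 ^ 2 - 2 * (g p.1 * g p.2) + g p.2 ^ 2 := funext fun p => by ring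
    rw [hexp]
    have iA : Integrable (fun p : 𝒳 × 𝒳 => g p.1 ^ 2) (ν₀.prod ν₀) :=
      ((measurePreserving_fst' ν₀ ν₀).integrable_comp
        (gsm.measurable.pow_const 2).aestronglyMeasurable).mpr hgsq
    have iA' : Integrable (fun p : 𝒳 × 𝒳 => g p.2 ^ 2) (ν₀.prod ν₀) :=
      ((measurePreserving_snd' ν₀ ν₀).integrable_comp
        (gsm.measurable.pow_const 2).aestronglyMeasurable).mpr hgsq
    have iB : Integrable (fun p : 𝒳 × 𝒳 => g p.1 * g p.2) (ν₀.prod ν₀) :=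
      integrable_mul_memL2 (hg2.comp_measurePreserving (measurePreserving_fst' ν₀ ν₀))
        (hg2.comp_measurePreserving (measurePreserving_snd' ν₀ ν₀))
    have iD : Integrable (fun p : 𝒳 × 𝒳 => 2 * (g p.1 * g p.2)) (ν₀.prod ν₀) :=
      iB.const_mul 2
    have iC : Integrable (fun p : 𝒳 × 𝒳 => g p.1 ^ 2 - 2 * (g p.1 * g p.2)) (ν₀.prod ν₀) :=
      iA.sub iD
    rw [integral_add iC iA', integral_sub iA iD, integral_const_mul]
    have e1 : ∫ p : 𝒳 × 𝒳, g p.1 ^ 2 ∂(ν₀.prod ν₀) = ∫ a, g a ^ 2 ∂ν₀ := by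
      conv_rhs => rw [← (measurePreserving_fst' ν₀ ν₀).map_eq]
      rw [integral_map measurable_fst.aemeasurable
        (gsm.measurable.pow_const 2).aestronglyMeasurable]
    have e2 : ∫ p : 𝒳 × 𝒳, g p.2 ^ 2 ∂(ν₀.prod ν₀) = ∫ a, g a ^ 2 ∂ν₀ := by
      conv_rhs => rw [← (measurePreserving_snd' ν₀ ν₀).map_eq]
      rw [integral_map measurable_snd.aemeasurable
        (gsm.measurable.pow_const 2).aestronglyMeasurable]
    have e3 : ∫ p : 𝒳 × 𝒳, g p.1 * g p.2 ∂(ν₀.prod ν₀) = (∫ a, g a ∂ν₀) * ∫ a, g a ∂ν₀ :=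
      integral_prod_mul g g
    rw [e1, e2, e3]
    simp only [hg]
    ring
  · rw [EF]
    exact integral_nonneg fun p => sq_nonneg _

/-- `E[(f(X) − f(X^{(1)})) (f(X^{[n]∖{1}}) − f(X^{[n]}))] = 2 E[g(X₁)²] − 2 (E f(X))²`,
where `g(X₁) = E[f(X) | X₁]`; in particular this quantity is nonnegative.
The first coordinate (1-based index 1) is `⟨0, hn⟩ : Fin n`. -/
theorem last_term_nonneg
    {Ω : Type*} [MeasurableSpace Ω] (P : Measure Ω) [IsProbabilityMeasure P]
    {𝒳 : Type*} [MeasurableSpace 𝒳] (n : ℕ) (hn : 0 < n)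
    (X X' : Fin n → Ω → 𝒳)
    (hmeas : ∀ i, Measurable (X i)) (hmeas' : ∀ i, Measurable (X' i))
    (hindep : iIndepFun (Sum.elim X X' : Fin n ⊕ Fin n → Ω → 𝒳) P)
    (hid : ∀ i, IdentDistrib (X' i) (X i) P P)
    (f : (Fin n → 𝒳) → ℝ) (hf : Measurable f)
    (hL2 : MemLp (fun ω => f (fun i => X i ω)) 2 P) :
    (∫ ω, (f (fun i => X i ω) - f (resample X X' {⟨0, hn⟩} ω)) *
        (f (resample X X' {l | l ≠ ⟨0, hn⟩} ω) - f (resample X X' Set.univ ω)) ∂P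
      = 2 * ∫ ω,
          ((P[fun ω' => f (fun i => X i ω') |
              MeasurableSpace.comap (X ⟨0, hn⟩) inferInstance]) ω) ^ 2 ∂P
        - 2 * (∫ ω, f (fun i => X i ω) ∂P) ^ 2) ∧
    0 ≤ ∫ ω, (f (fun i => X i ω) - f (resample X X' {⟨0, hn⟩} ω)) *
        (f (resample X X' {l | l ≠ ⟨0, hn⟩} ω) - f (resample X X' Set.univ ω)) ∂P := by
  obtain ⟨m, rfl⟩ : ∃ m, n = m + 1 := ⟨n - 1, (Nat.succ_pred_eq_of_pos hn).symm⟩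
  set i0 : Fin (m + 1) := ⟨0, hn⟩ with hi0
  -- the measures
  haveI hprob : ∀ i : Fin (m + 1), IsProbabilityMeasure (P.map (X i)) :=
    fun i => Measure.isProbabilityMeasure_map (hmeas i).aemeasurable
  set ν₀ : Measure 𝒳 := P.map (X i0) with hν₀
  set νr : Measure (Fin m → 𝒳) := Measure.pi (fun j => P.map (X (i0.succAbove j))) with hνr
  haveI : IsProbabilityMeasure ν₀ := hprob i0
  haveI : IsProbabilityMeasure νr := by rw [hνr]; infer_instance
  -- the equivalence splitting off coordinate `i0`, and `F`
  set e2 := MeasurableEquiv.piFinSuccAbove (fun _ : Fin (m + 1) => 𝒳) i0 with he2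
  set F : 𝒳 × (Fin m → 𝒳) → ℝ := fun p => f (e2.symm p) with hF
  have hFm : Measurable F := hf.comp e2.symm.measurable
  -- joint law of the 2(m+1) coordinates
  have hZm : ∀ j : Fin (m + 1) ⊕ Fin (m + 1), Measurable (Sum.elim X X' j) := by
    rintro (i | i)
    · exact hmeas i
    · exact hmeas' i
  have lawZ := map_fun_eq_pi P (Sum.elim X X') hZm hindep
  have mpZ : MeasurePreserving (fun ω j => Sum.elim X X' j ω) P
      (Measure.pi (fun j => P.map (Sum.elim X X' j))) :=
    ⟨measurable_pi_lambda _ hZm, lawZ⟩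
  have hκ : (fun j : Fin (m + 1) ⊕ Fin (m + 1) => P.map (Sum.elim X X' j))
      = Sum.elim (fun i => P.map (X i)) (fun i => P.map (X i)) := by
    funext j
    cases j with
    | inl i => rfl
    | inr i => exact (hid i).map_eq
  rw [hκ] at mpZ
  haveI : ∀ j : Fin (m + 1) ⊕ Fin (m + 1),
      IsProbabilityMeasure (Sum.elim (fun i => P.map (X i)) (fun i => P.map (X i)) j) := by
    rintro (i | i) <;> exact hprob i
  have mpSum := measurePreserving_sumPiEquivProdPi
    (X := fun _ : Fin (m + 1) ⊕ Fin (m + 1) => 𝒳)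
    (Sum.elim (fun i => P.map (X i)) (fun i => P.map (X i)))
  have mpB := measurePreserving_piFinSuccAbove (fun i : Fin (m + 1) => P.map (X i)) i0
  -- the full measure-preserving map into ((𝒳 × 𝒳) × (R × R))
  have mpW : MeasurePreserving
      (fun ω => (e2 (fun i => X i ω), e2 (fun i => X' i ω))) P ((ν₀.prod νr).prod (ν₀.prod νr)) := by
    have h := (mpB.prod mpB).comp (mpSum.comp mpZ)
    exact h
  have mpΦ1 : MeasurePreserving (fun ω => e2 (fun i => X i ω)) P (ν₀.prod νr) :=
    (measurePreserving_fst' (ν₀.prod νr) (ν₀.prod νr)).comp mpW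
  -- the reordering map
  have mpR : MeasurePreserving
      (fun w : (𝒳 × (Fin m → 𝒳)) × (𝒳 × (Fin m → 𝒳)) => ((w.1.1, w.2.1), (w.1.2, w.2.2)))
      ((ν₀.prod νr).prod (ν₀.prod νr)) ((ν₀.prod ν₀).prod (νr.prod νr)) := by
    have h1 := measurePreserving_prodAssoc ν₀ νr (ν₀.prod νr)
    have h2 := (MeasurePreserving.id ν₀).prod
      ((measurePreserving_prodAssoc νr ν₀ νr).symm MeasurableEquiv.prodAssoc)
    have h3 := (MeasurePreserving.id ν₀).prod
      ((Measure.measurePreserving_swap (μ := νr) (ν := ν₀)).prod (MeasurePreserving.id νr))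
    have h4 := (MeasurePreserving.id ν₀).prod (measurePreserving_prodAssoc ν₀ νr νr)
    have h5 := (measurePreserving_prodAssoc ν₀ ν₀ (νr.prod νr)).symm
      MeasurableEquiv.prodAssoc
    exact h5.comp (h4.comp (h3.comp (h2.comp h1)))
  have mpΨ : MeasurePreserving
      (fun ω => ((X i0 ω, X' i0 ω),
        (fun j => X (i0.succAbove j) ω, fun j => X' (i0.succAbove j) ω)))
      P ((ν₀.prod ν₀).prod (νr.prod νr)) := mpR.comp mpW
  -- `F` is in L² of the product
  have hF2 : MemLp F 2 (ν₀.prod νr) := by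
    have hcomp : (F ∘ fun ω => e2 (fun i => X i ω)) = fun ω => f (fun i => X i ω) :=
      funext fun ω => by
        simp only [Function.comp_apply, hF, MeasurableEquiv.symm_apply_apply]
    have := (memLp_map_measure_iff hFm.aestronglyMeasurable
      mpΦ1.measurable.aemeasurable).mpr (by rwa [hcomp])
    rwa [mpΦ1.map_eq] at this
  -- apply the core identity
  obtain ⟨hkey, hpos⟩ := main_product_identity ν₀ νr F hFm hF2
  -- identification of the four resampled vectors
  have he2app : ∀ z : Fin (m + 1) → 𝒳, e2 z = (z i0, Fin.removeNth i0 z) := fun z => rfl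
  have hvec1 : ∀ ω, (fun i => X i ω) = e2.symm (X i0 ω, fun j => X (i0.succAbove j) ω) :=
    fun ω => (e2.symm_apply_apply (fun i => X i ω)).symm
  have hvec4 : ∀ ω, resample X X' Set.univ ω
      = e2.symm (X' i0 ω, fun j => X' (i0.succAbove j) ω) := by
    intro ω
    have h : e2 (resample X X' Set.univ ω) = (X' i0 ω, fun j => X' (i0.succAbove j) ω) := by
      rw [he2app]
      refine Prod.ext ?_ ?_
      · simp [resample]
      · funext j; simp [resample, Fin.removeNth]
    rw [← h, e2.symm_apply_apply]
  have hvec2 : ∀ ω, resample X X' {i0} ω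
      = e2.symm (X' i0 ω, fun j => X (i0.succAbove j) ω) := by
    intro ω
    have h : e2 (resample X X' {i0} ω) = (X' i0 ω, fun j => X (i0.succAbove j) ω) := by
      rw [he2app]
      refine Prod.ext ?_ ?_
      · simp [resample]
      · funext j; simp [resample, Fin.removeNth, Fin.succAbove_ne]
    rw [← h, e2.symm_apply_apply]
  have hvec3 : ∀ ω, resample X X' {l | l ≠ i0} ω
      = e2.symm (X i0 ω, fun j => X' (i0.succAbove j) ω) := by
    intro ω
    have h : e2 (resample X X' {l | l ≠ i0} ω) = (X i0 ω, fun j => X' (i0.succAbove j) ω) := by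
      rw [he2app]
      refine Prod.ext ?_ ?_
      · simp [resample]
      · funext j; simp [resample, Fin.removeNth, Fin.succAbove_ne]
    rw [← h, e2.symm_apply_apply]
  -- transfer of the main integral
  have hHm : Measurable (fun w : (𝒳 × 𝒳) × ((Fin m → 𝒳) × (Fin m → 𝒳)) =>
      (F (w.1.1, w.2.1) - F (w.1.2, w.2.1)) * (F (w.1.1, w.2.2) - F (w.1.2, w.2.2))) := by
    have m11 : Measurable fun w : (𝒳 × 𝒳) × ((Fin m → 𝒳) × (Fin m → 𝒳)) => F (w.1.1, w.2.1) :=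
      hFm.comp ((measurable_fst.fst).prodMk (measurable_snd.fst))
    have m21 : Measurable fun w : (𝒳 × 𝒳) × ((Fin m → 𝒳) × (Fin m → 𝒳)) => F (w.1.2, w.2.1) :=
      hFm.comp ((measurable_fst.snd).prodMk (measurable_snd.fst))
    have m12 : Measurable fun w : (𝒳 × 𝒳) × ((Fin m → 𝒳) × (Fin m → 𝒳)) => F (w.1.1, w.2.2) :=
      hFm.comp ((measurable_fst.fst).prodMk (measurable_snd.snd))
    have m22 : Measurable fun w : (𝒳 × 𝒳) × ((Fin m → 𝒳) × (Fin m → 𝒳)) => F (w.1.2, w.2.2) :=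
      hFm.comp ((measurable_fst.snd).prodMk (measurable_snd.snd))
    exact (m11.sub m21).mul (m12.sub m22)
  have E0 : ∫ w, (F (w.1.1, w.2.1) - F (w.1.2, w.2.1)) * (F (w.1.1, w.2.2) - F (w.1.2, w.2.2))
        ∂((ν₀.prod ν₀).prod (νr.prod νr))
      = ∫ ω, (f (fun i => X i ω) - f (resample X X' {i0} ω)) *
          (f (resample X X' {l | l ≠ i0} ω) - f (resample X X' Set.univ ω)) ∂P := by
    rw [← mpΨ.map_eq, integral_map mpΨ.measurable.aemeasurable hHm.aestronglyMeasurable]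
    refine integral_congr_ae (Filter.Eventually.of_forall fun ω => ?_)
    show (F (X i0 ω, fun j => X (i0.succAbove j) ω)
          - F (X' i0 ω, fun j => X (i0.succAbove j) ω)) *
        (F (X i0 ω, fun j => X' (i0.succAbove j) ω)
          - F (X' i0 ω, fun j => X' (i0.succAbove j) ω))
      = (f (fun i => X i ω) - f (resample X X' {i0} ω)) *
        (f (resample X X' {l | l ≠ i0} ω) - f (resample X X' Set.univ ω))
    simp only [hF]
    rw [hvec1 ω, hvec2 ω, hvec3 ω, hvec4 ω]
  -- the conditional expectation is `g ∘ X i0`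
  set g : 𝒳 → ℝ := fun a => ∫ y, F (a, y) ∂νr with hgdef
  have gsm : StronglyMeasurable g := hFm.stronglyMeasurable.integral_prod_right'
  have hm : MeasurableSpace.comap (X i0) inferInstance ≤ _ := (hmeas i0).comap_le
  haveI : SigmaFinite (P.trim hm) := by
    haveI := isFiniteMeasure_trim (μ := P) hm
    infer_instance
  have hfint : Integrable (fun ω => f (fun i => X i ω)) P := hL2.integrable one_le_two
  have hF1 : Integrable F (ν₀.prod νr) := hF2.integrable one_le_two
  have hg2 : MemLp g 2 ν₀ := memL2_integral_right ν₀ νr hFm hF2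
  have hgX2 : MemLp (fun ω => g (X i0 ω)) 2 P := by
    have := (memLp_map_measure_iff gsm.aestronglyMeasurable
      (hmeas i0).aemeasurable).mp (by rwa [← hν₀])
    exact this
  have hgXint : Integrable (fun ω => g (X i0 ω)) P := hgX2.integrable one_le_two
  have hCE : (fun ω => g (X i0 ω)) =ᵐ[P]
      P[(fun ω' => f (fun i => X i ω')) | MeasurableSpace.comap (X i0) inferInstance] := by
    refine ae_eq_condExp_of_forall_setIntegral_eq hm hfint
      (fun s _ _ => hgXint.integrableOn) ?_ ?_
    · rintro s ⟨t, ht, rfl⟩ -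
      have lhs : ∫ ω in X i0 ⁻¹' t, g (X i0 ω) ∂P = ∫ a in t, g a ∂ν₀ := by
        rw [hν₀, setIntegral_map ht gsm.aestronglyMeasurable (hmeas i0).aemeasurable]
      have hpre : X i0 ⁻¹' t = (fun ω => e2 (fun i => X i ω)) ⁻¹' (t ×ˢ Set.univ) := by
        ext ω
        simp only [Set.mem_preimage, Set.mem_prod, Set.mem_univ, and_true]
        rfl
      have rhs : ∫ ω in X i0 ⁻¹' t, f (fun i => X i ω) ∂P = ∫ a in t, g a ∂ν₀ := by
        have step1 : ∫ ω in X i0 ⁻¹' t, f (fun i => X i ω) ∂P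
            = ∫ ω in X i0 ⁻¹' t, F (e2 (fun i => X i ω)) ∂P := by
          refine setIntegral_congr_ae (hm _ ⟨t, ht, rfl⟩) ?_
          refine Filter.Eventually.of_forall fun ω _ => ?_
          simp only [hF, MeasurableEquiv.symm_apply_apply]
        rw [step1, hpre, ← setIntegral_map (ht.prod MeasurableSet.univ)
          hFm.aestronglyMeasurable mpΦ1.measurable.aemeasurable, mpΦ1.map_eq,
          setIntegral_prod _ (hF1.integrableOn)]
        simp [hgdef]
      rw [lhs, rhs]
    · exact (gsm.comp_measurable (measurable_iff_comap_le.mpr le_rfl)).aestronglyMeasurable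
  -- rewrite the conditional-expectation integral
  have hCEsq : ∫ ω,
      ((P[(fun ω' => f (fun i => X i ω')) | MeasurableSpace.comap (X i0) inferInstance]) ω) ^ 2 ∂P
      = ∫ a, g a ^ 2 ∂ν₀ := by
    have h1 : (fun ω =>
        ((P[(fun ω' => f (fun i => X i ω')) |
          MeasurableSpace.comap (X i0) inferInstance]) ω) ^ 2)
        =ᵐ[P] fun ω => g (X i0 ω) ^ 2 := by
      filter_upwards [hCE] with ω hω
      rw [← hω]
    rw [integral_congr_ae h1, hν₀,
      integral_map (hmeas i0).aemeasurable (gsm.measurable.pow_const 2).aestronglyMeasurable]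
  -- rewrite the plain expectation
  have hEf : ∫ ω, f (fun i => X i ω) ∂P = ∫ a, g a ∂ν₀ := by
    have step1 : ∫ ω, f (fun i => X i ω) ∂P = ∫ ω, F (e2 (fun i => X i ω)) ∂P := by
      refine integral_congr_ae (Filter.Eventually.of_forall fun ω => ?_)
      simp only [hF, MeasurableEquiv.symm_apply_apply]
    rw [step1, ← integral_map mpΦ1.measurable.aemeasurable hFm.aestronglyMeasurable,
      mpΦ1.map_eq, integral_prod _ hF1]
  constructor
  · rw [← E0, hkey, hCEsq, hEf]
  · rw [← E0]
    exact hpos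
end

section
/- Let X₁,…,Xₙ be independent random variables taking values in a set 𝒳, let f : 𝒳ⁿ → ℝ be measurable with f(X) square-integrable, and let A ⊆ {1,…,n} be a subset with 1 ∉ A. Then E[f(X) f(X^A)] ≥ E[f(X^{(1)}) f(X^A)]. -/
open MeasureTheory ProbabilityTheory

private lemma sq_integral_le {δ : Type*} [MeasurableSpace δ] {μ : Measure δ}
    [IsProbabilityMeasure μ] {g : δ → ℝ} (hg : MemLp g 2 μ) :
    (∫ x, g x ∂μ) ^ 2 ≤ ∫ x, g x ^ 2 ∂μ := by
  have h := variance_nonneg g μ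
  rw [variance_eq_sub hg] at h
  simp only [Pi.pow_apply] at h
  linarith

private lemma mp_fst {β γ : Type*} [MeasurableSpace β] [MeasurableSpace γ]
    (μ : Measure β) (m : Measure γ) [SFinite μ] [IsProbabilityMeasure m] :
    MeasurePreserving Prod.fst (μ.prod m) μ :=
  ⟨measurable_fst, by simp⟩

private lemma mp_snd {β γ : Type*} [MeasurableSpace β] [MeasurableSpace γ]
    (μ : Measure β) (m : Measure γ) [IsProbabilityMeasure μ] [SFinite m] :
    MeasurePreserving Prod.snd (μ.prod m) m :=
  ⟨measurable_snd, by simp⟩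

private lemma memLp_comp_mp {δ₁ δ₂ : Type*} [MeasurableSpace δ₁] [MeasurableSpace δ₂]
    {μ₁ : Measure δ₁} {μ₂ : Measure δ₂} {m : δ₁ → δ₂} (hm : MeasurePreserving m μ₁ μ₂)
    {Φ : δ₂ → ℝ} (hΦ : Measurable Φ) (h : MemLp Φ 2 μ₂) : MemLp (fun x => Φ (m x)) 2 μ₁ := by
  rw [← hm.map_eq] at h
  exact (memLp_map_measure_iff hΦ.aestronglyMeasurable hm.measurable.aemeasurable).mp h

private lemma integrable_comp_mp {δ₁ δ₂ : Type*} [MeasurableSpace δ₁] [MeasurableSpace δ₂]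
    {μ₁ : Measure δ₁} {μ₂ : Measure δ₂} {m : δ₁ → δ₂} (hm : MeasurePreserving m μ₁ μ₂)
    {Φ : δ₂ → ℝ} (hΦ : Measurable Φ) (h : Integrable Φ μ₂) : Integrable (fun x => Φ (m x)) μ₁ := by
  rw [← hm.map_eq] at h
  exact (integrable_map_measure hΦ.aestronglyMeasurable hm.measurable.aemeasurable).mp h

private lemma integrable_mul_of_memLp_two {δ : Type*} [MeasurableSpace δ] {μ : Measure δ}
    {φ ψ : δ → ℝ} (hφ : MemLp φ 2 μ) (hψ : MemLp ψ 2 μ) :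
    Integrable (fun x => φ x * ψ x) μ := by
  have h : MemLp (φ • ψ) 1 μ := hψ.smul hφ (hpqr := ⟨by simp [one_div, ENNReal.inv_two_add_inv_two]⟩)
  exact memLp_one_iff_integrable.mp h

private lemma integral_snd_prod {β γ : Type*} [MeasurableSpace β] [MeasurableSpace γ]
    (μ : Measure β) (m : Measure γ) [IsProbabilityMeasure μ] [SFinite m]
    (h : γ → ℝ) (hm : AEStronglyMeasurable h m) :
    ∫ z : β × γ, h z.2 ∂(μ.prod m) = ∫ y, h y ∂m := by
  have hmap : (μ.prod m).map Prod.snd = m := by simp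
  conv_rhs => rw [← hmap]
  exact (integral_map measurable_snd.aemeasurable (by rwa [hmap])).symm

private lemma law_tuple {Ω : Type*} [MeasurableSpace Ω] {P : Measure Ω}
    {𝒳 : Type*} [MeasurableSpace 𝒳] {ι : Type*} (Y : ι → Ω → 𝒳)
    (hY : ∀ j, Measurable (Y j))
    (h : iIndepFun Y P)
    {κ : Type*} [Fintype κ] (e : κ → ι) (he : Function.Injective e) :
    P.map (fun ω (k : κ) => Y (e k) ω) = Measure.pi (fun k => P.map (Y (e k))) := by
  classical
  haveI : IsProbabilityMeasure P := h.isProbabilityMeasure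
  haveI : ∀ k : κ, IsProbabilityMeasure (P.map (Y (e k))) := fun k =>
    Measure.isProbabilityMeasure_map (hY (e k)).aemeasurable
  refine (Measure.pi_eq fun s hs => ?_).symm
  rw [Measure.map_apply (measurable_pi_lambda _ fun k => hY (e k)) (MeasurableSet.univ_pi hs)]
  have hpre : (fun ω (k : κ) => Y (e k) ω) ⁻¹' (Set.univ.pi s)
      = ⋂ j ∈ Finset.image e Finset.univ, Y j ⁻¹' (Function.extend e s (fun _ => Set.univ) j) := by
    ext ω
    simp only [Set.mem_preimage, Set.mem_pi, Set.mem_univ, true_implies, Set.mem_iInter,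
      Finset.mem_image, Finset.mem_univ, true_and]
    constructor
    · rintro hx j ⟨k, rfl⟩
      rw [he.extend_apply]; exact hx k
    · intro hx k
      have := hx (e k) ⟨k, rfl⟩
      rwa [he.extend_apply] at this
  have hsets : ∀ j ∈ Finset.image e Finset.univ,
      MeasurableSet (Function.extend e s (fun _ => Set.univ) j) := by
    intro j hj
    obtain ⟨k, -, rfl⟩ := Finset.mem_image.mp hj
    rw [he.extend_apply]; exact hs k
  rw [hpre, h.measure_inter_preimage_eq_mul _ hsets,
    Finset.prod_image (fun k _ l _ hkl => he hkl)]
  exact Finset.prod_congr rfl fun k _ => by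
    rw [he.extend_apply, Measure.map_apply (hY (e k)) (hs k)]

private lemma key_ineq {Ω T A R : Type*} [MeasurableSpace Ω] [MeasurableSpace T]
    [MeasurableSpace A] [MeasurableSpace R]
    (P : Measure Ω) [IsProbabilityMeasure P]
    (ν : Measure T) (α : Measure A) (ρ : Measure R)
    [IsProbabilityMeasure ν] [IsProbabilityMeasure α] [IsProbabilityMeasure ρ]
    (ct cs : Ω → T) (ca ca' : Ω → A) (cr : Ω → R)
    (hct : Measurable ct) (hcs : Measurable cs) (hca : Measurable ca)
    (hca' : Measurable ca') (hcr : Measurable cr)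
    (hlaw : P.map (fun ω => (cr ω, (ct ω, ((cs ω, ca ω), ca' ω))))
      = ρ.prod (ν.prod ((ν.prod α).prod α)))
    (Φ : T × A × R → ℝ) (hΦ : Measurable Φ)
    (hL2 : MemLp (fun ω => Φ (ct ω, ca ω, cr ω)) 2 P) :
    ∫ ω, Φ (cs ω, ca ω, cr ω) * Φ (ct ω, ca' ω, cr ω) ∂P
      ≤ ∫ ω, Φ (ct ω, ca ω, cr ω) * Φ (ct ω, ca' ω, cr ω) ∂P := by
  -- the big product space
  have hWm : Measurable (fun ω => (cr ω, (ct ω, ((cs ω, ca ω), ca' ω)))) :=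
    hcr.prodMk (hct.prodMk (((hcs.prodMk hca)).prodMk hca'))
  -- projections
  have hp1m : Measurable (fun q : R × (T × ((T × A) × A)) => ((q.2.2.1.1 : T), (q.2.2.1.2, q.1))) := by
    fun_prop
  have hp2m : Measurable (fun q : R × (T × ((T × A) × A)) => ((q.2.1 : T), (q.2.2.1.2, q.1))) := by
    fun_prop
  have hp3m : Measurable (fun q : R × (T × ((T × A) × A)) => ((q.2.1 : T), (q.2.2.2, q.1))) := by
    fun_prop
  have mp1 : MeasurePreserving (fun q : R × (T × ((T × A) × A)) => ((q.2.2.1.1 : T), (q.2.2.1.2, q.1)))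
      (ρ.prod (ν.prod ((ν.prod α).prod α))) (ν.prod (α.prod ρ)) := by
    have h1 : MeasurePreserving (Prod.map (id : R → R) (fun y : T × ((T × A) × A) => y.2.1))
        (ρ.prod (ν.prod ((ν.prod α).prod α))) (ρ.prod (ν.prod α)) :=
      (MeasurePreserving.id ρ).prod ((mp_fst (ν.prod α) α).comp (mp_snd ν ((ν.prod α).prod α)))
    have h2 : MeasurePreserving Prod.swap (ρ.prod (ν.prod α)) ((ν.prod α).prod ρ) :=
      Measure.measurePreserving_swap
    have h3 := measurePreserving_prodAssoc ν α ρ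
    exact (h3.comp (h2.comp h1))
  have mp2 : MeasurePreserving (fun q : R × (T × ((T × A) × A)) => ((q.2.1 : T), (q.2.2.1.2, q.1)))
      (ρ.prod (ν.prod ((ν.prod α).prod α))) (ν.prod (α.prod ρ)) := by
    have h1 : MeasurePreserving
        (Prod.map (id : R → R) (Prod.map (id : T → T) (fun w : (T × A) × A => w.1.2)))
        (ρ.prod (ν.prod ((ν.prod α).prod α))) (ρ.prod (ν.prod α)) :=
      (MeasurePreserving.id ρ).prod ((MeasurePreserving.id ν).prod
        ((mp_snd ν α).comp (mp_fst (ν.prod α) α)))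
    have h2 : MeasurePreserving Prod.swap (ρ.prod (ν.prod α)) ((ν.prod α).prod ρ) :=
      Measure.measurePreserving_swap
    have h3 := measurePreserving_prodAssoc ν α ρ
    exact (h3.comp (h2.comp h1))
  have mp3 : MeasurePreserving (fun q : R × (T × ((T × A) × A)) => ((q.2.1 : T), (q.2.2.2, q.1)))
      (ρ.prod (ν.prod ((ν.prod α).prod α))) (ν.prod (α.prod ρ)) := by
    have h1 : MeasurePreserving
        (Prod.map (id : R → R) (Prod.map (id : T → T) (fun w : (T × A) × A => w.2)))
        (ρ.prod (ν.prod ((ν.prod α).prod α))) (ρ.prod (ν.prod α)) :=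
      (MeasurePreserving.id ρ).prod ((MeasurePreserving.id ν).prod (mp_snd (ν.prod α) α))
    have h2 : MeasurePreserving Prod.swap (ρ.prod (ν.prod α)) ((ν.prod α).prod ρ) :=
      Measure.measurePreserving_swap
    have h3 := measurePreserving_prodAssoc ν α ρ
    exact (h3.comp (h2.comp h1))
  -- MemLp of Φ on the law of (t, a, r)
  have hΦ2 : MemLp Φ 2 (ν.prod (α.prod ρ)) := by
    have h0 : MemLp (Φ ∘ ((fun q : R × (T × ((T × A) × A)) => ((q.2.1 : T), (q.2.2.1.2, q.1)))
        ∘ (fun ω => (cr ω, (ct ω, ((cs ω, ca ω), ca' ω)))))) 2 P := hL2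
    have h1 := (memLp_map_measure_iff hΦ.aestronglyMeasurable
      ((hp2m.comp hWm)).aemeasurable).mpr h0
    rwa [← Measure.map_map hp2m hWm, hlaw, mp2.map_eq] at h1
  have hmem1 := memLp_comp_mp mp1 hΦ hΦ2
  have hmem2 := memLp_comp_mp mp2 hΦ hΦ2
  have hmem3 := memLp_comp_mp mp3 hΦ hΦ2
  have hH1 : Integrable (fun q : R × (T × ((T × A) × A)) =>
      Φ (q.2.2.1.1, (q.2.2.1.2, q.1)) * Φ (q.2.1, (q.2.2.2, q.1)))
      (ρ.prod (ν.prod ((ν.prod α).prod α))) := integrable_mul_of_memLp_two hmem1 hmem3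
  have hH2 : Integrable (fun q : R × (T × ((T × A) × A)) =>
      Φ (q.2.1, (q.2.2.1.2, q.1)) * Φ (q.2.1, (q.2.2.2, q.1)))
      (ρ.prod (ν.prod ((ν.prod α).prod α))) := integrable_mul_of_memLp_two hmem2 hmem3
  -- transfer the two integrals to the product space
  have hint1 : ∫ ω, Φ (cs ω, ca ω, cr ω) * Φ (ct ω, ca' ω, cr ω) ∂P
      = ∫ q : R × (T × ((T × A) × A)),
          Φ (q.2.2.1.1, (q.2.2.1.2, q.1)) * Φ (q.2.1, (q.2.2.2, q.1))
          ∂(ρ.prod (ν.prod ((ν.prod α).prod α))) := by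
    rw [← hlaw]
    exact (integral_map hWm.aemeasurable
      (((hΦ.comp hp1m).mul (hΦ.comp hp3m)).aestronglyMeasurable)).symm
  have hint2 : ∫ ω, Φ (ct ω, ca ω, cr ω) * Φ (ct ω, ca' ω, cr ω) ∂P
      = ∫ q : R × (T × ((T × A) × A)),
          Φ (q.2.1, (q.2.2.1.2, q.1)) * Φ (q.2.1, (q.2.2.2, q.1))
          ∂(ρ.prod (ν.prod ((ν.prod α).prod α))) := by
    rw [← hlaw]
    exact (integral_map hWm.aemeasurable
      (((hΦ.comp hp2m).mul (hΦ.comp hp3m)).aestronglyMeasurable)).symm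
  -- measurability of the partial integral
  have hΦ'm : Measurable (fun z : (R × T) × A => Φ (z.1.2, (z.2, z.1.1))) := by fun_prop
  have hgm : StronglyMeasurable (fun x : R × T => ∫ a, Φ (x.2, (a, x.1)) ∂α) :=
    hΦ'm.stronglyMeasurable.integral_prod_right'
  -- MemLp of sections of the partial integral
  have mp_e : MeasurePreserving (fun z : (R × T) × A => ((z.1.2 : T), ((z.2 : A), z.1.1)))
      ((ρ.prod ν).prod α) (ν.prod (α.prod ρ)) := by
    have h1 := measurePreserving_prodAssoc ρ ν α
    have h2 : MeasurePreserving Prod.swap (ρ.prod (ν.prod α)) ((ν.prod α).prod ρ) :=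
      Measure.measurePreserving_swap
    have h3 := measurePreserving_prodAssoc ν α ρ
    exact (h3.comp (h2.comp h1))
  have hΦ'2 : MemLp (fun z : (R × T) × A => Φ (z.1.2, (z.2, z.1.1))) 2 ((ρ.prod ν).prod α) :=
    memLp_comp_mp mp_e hΦ hΦ2
  have hK : Integrable (fun z : (R × T) × A => Φ (z.1.2, (z.2, z.1.1)) ^ 2) ((ρ.prod ν).prod α) :=
    hΦ'2.integrable_sq
  have hu_int : Integrable (fun x : R × T => ∫ a, Φ (x.2, (a, x.1)) ^ 2 ∂α) (ρ.prod ν) :=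
    hK.integral_prod_left
  have hKsec : ∀ᵐ x ∂(ρ.prod ν), Integrable (fun a => Φ (x.2, (a, x.1)) ^ 2) α :=
    hK.prod_right_ae
  have hgsq : ∀ᵐ x ∂(ρ.prod ν),
      (∫ a, Φ (x.2, (a, x.1)) ∂α) ^ 2 ≤ ∫ a, Φ (x.2, (a, x.1)) ^ 2 ∂α := by
    filter_upwards [hKsec] with x hx
    have hsect : MemLp (fun a => Φ (x.2, (a, x.1))) 2 α :=
      (memLp_two_iff_integrable_sq ((hΦ.comp (by fun_prop)).aestronglyMeasurable)).mpr hx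
    exact sq_integral_le hsect
  have husec : ∀ᵐ r ∂ρ, Integrable (fun t => ∫ a, Φ (t, (a, r)) ^ 2 ∂α) ν :=
    hu_int.prod_right_ae
  have hgae := Measure.ae_ae_of_ae_prod hgsq
  have hgL2 : ∀ᵐ r ∂ρ, MemLp (fun t => ∫ a, Φ (t, (a, r)) ∂α) 2 ν := by
    filter_upwards [hgae, husec] with r h1 h2
    refine (memLp_two_iff_integrable_sq ?_).mpr ?_
    · exact (hgm.comp_measurable measurable_prodMk_left).aestronglyMeasurable
    · refine h2.mono' ?_ ?_
      · exact ((hgm.measurable.comp measurable_prodMk_left).pow_const 2).aestronglyMeasurable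
      · filter_upwards [h1] with t ht
        rw [Real.norm_eq_abs, abs_of_nonneg (sq_nonneg _)]
        exact ht
  -- integrable sections
  have hsec1 : ∀ᵐ r ∂ρ, Integrable (fun y : T × ((T × A) × A) =>
      Φ (y.2.1.1, (y.2.1.2, r)) * Φ (y.1, (y.2.2, r))) (ν.prod ((ν.prod α).prod α)) :=
    hH1.prod_right_ae
  have hsec2 : ∀ᵐ r ∂ρ, Integrable (fun y : T × ((T × A) × A) =>
      Φ (y.1, (y.2.1.2, r)) * Φ (y.1, (y.2.2, r))) (ν.prod ((ν.prod α).prod α)) :=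
    hH2.prod_right_ae
  have hGsec : ∀ᵐ r ∂ρ, Integrable (fun z : T × A => Φ (z.1, (z.2, r))) (ν.prod α) := by
    have h2 : Integrable (fun z : (T × A) × R => Φ (z.1.1, (z.1.2, z.2))) ((ν.prod α).prod ρ) :=
      integrable_comp_mp (measurePreserving_prodAssoc ν α ρ) hΦ (hΦ2.integrable one_le_two)
    exact h2.prod_left_ae
  -- pointwise (in r) comparison
  have hpt : ∀ᵐ r ∂ρ,
      (∫ y : T × ((T × A) × A), Φ (y.2.1.1, (y.2.1.2, r)) * Φ (y.1, (y.2.2, r))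
        ∂(ν.prod ((ν.prod α).prod α)))
      ≤ ∫ y : T × ((T × A) × A), Φ (y.1, (y.2.1.2, r)) * Φ (y.1, (y.2.2, r))
        ∂(ν.prod ((ν.prod α).prod α)) := by
    filter_upwards [hsec1, hsec2, hGsec, hgL2] with r h1 h2 h3 h4
    have e2 : (∫ y : T × ((T × A) × A), Φ (y.1, (y.2.1.2, r)) * Φ (y.1, (y.2.2, r))
        ∂(ν.prod ((ν.prod α).prod α)))
        = ∫ t, (∫ a, Φ (t, (a, r)) ∂α) ^ 2 ∂ν := by
      rw [integral_prod _ h2]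
      refine integral_congr_ae (Filter.Eventually.of_forall fun t => ?_)
      have := integral_prod_mul (μ := ν.prod α) (ν := α)
        (f := fun z : T × A => Φ (t, (z.2, r))) (g := fun a' : A => Φ (t, (a', r)))
      simp only at this ⊢
      rw [this, integral_snd_prod ν α (fun a => Φ (t, (a, r)))
        ((hΦ.comp (by fun_prop)).aestronglyMeasurable), sq]
    have e1 : (∫ y : T × ((T × A) × A), Φ (y.2.1.1, (y.2.1.2, r)) * Φ (y.1, (y.2.2, r))
        ∂(ν.prod ((ν.prod α).prod α)))
        = (∫ t, (∫ a, Φ (t, (a, r)) ∂α) ∂ν) ^ 2 := by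
      rw [integral_prod _ h1]
      have einner : ∀ t : T, (∫ w : (T × A) × A, Φ (w.1.1, (w.1.2, r)) * Φ (t, (w.2, r))
          ∂((ν.prod α).prod α))
          = (∫ z : T × A, Φ (z.1, (z.2, r)) ∂(ν.prod α)) * ∫ a', Φ (t, (a', r)) ∂α := fun t =>
        integral_prod_mul (μ := ν.prod α) (ν := α)
          (f := fun z : T × A => Φ (z.1, (z.2, r))) (g := fun a' : A => Φ (t, (a', r)))
      calc (∫ t, ∫ w : (T × A) × A, Φ (w.1.1, (w.1.2, r)) * Φ (t, (w.2, r))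
            ∂((ν.prod α).prod α) ∂ν)
          = ∫ t, (∫ z : T × A, Φ (z.1, (z.2, r)) ∂(ν.prod α)) * ∫ a', Φ (t, (a', r)) ∂α ∂ν := by
            exact integral_congr_ae (Filter.Eventually.of_forall fun t => einner t)
        _ = (∫ z : T × A, Φ (z.1, (z.2, r)) ∂(ν.prod α)) * ∫ t, (∫ a', Φ (t, (a', r)) ∂α) ∂ν :=
            integral_const_mul _ _
        _ = (∫ t, (∫ a, Φ (t, (a, r)) ∂α) ∂ν) ^ 2 := by
            rw [integral_prod _ h3, sq]
    rw [e1, e2]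
    exact sq_integral_le h4
  rw [hint1, hint2, integral_prod _ hH1, integral_prod _ hH2]
  exact integral_mono_ae hH1.integral_prod_left hH2.integral_prod_left hpt


/-- If `1 ∉ A` then `E[f(X) f(X^A)] ≥ E[f(X^{(1)}) f(X^A)]`, where `X^{(1)}` replaces the
first coordinate of `X` by a further independent copy `X''₁` (independent of `X` and `X'`).
The first coordinate (1-based index 1) is `⟨0, hn⟩ : Fin n`. -/
theorem resample_first_decreases_correlation
    {Ω : Type*} [MeasurableSpace Ω] (P : Measure Ω) [IsProbabilityMeasure P]
    {𝒳 : Type*} [MeasurableSpace 𝒳] (n : ℕ) (hn : 0 < n)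
    (X X' X'' : Fin n → Ω → 𝒳)
    (hmeas : ∀ i, Measurable (X i)) (hmeas' : ∀ i, Measurable (X' i))
    (hmeas'' : ∀ i, Measurable (X'' i))
    (hindep : iIndepFun
      (Sum.elim X (Sum.elim X' X'') : Fin n ⊕ (Fin n ⊕ Fin n) → Ω → 𝒳) P)
    (hid : ∀ i, IdentDistrib (X' i) (X i) P P)
    (hid' : ∀ i, IdentDistrib (X'' i) (X i) P P)
    (f : (Fin n → 𝒳) → ℝ) (hf : Measurable f)
    (hL2 : MemLp (fun ω => f (fun i => X i ω)) 2 P)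
    (A : Set (Fin n)) (hA : (⟨0, hn⟩ : Fin n) ∉ A) :
    ∫ ω, f (fun i => if i = ⟨0, hn⟩ then X'' i ω else X i ω) * f (resample X X' A ω) ∂P
      ≤ ∫ ω, f (fun i => X i ω) * f (resample X X' A ω) ∂P := by
  classical
  set z : Fin n := ⟨0, hn⟩ with hzdef
  set Y : (Fin n ⊕ (Fin n ⊕ Fin n)) → Ω → 𝒳 := Sum.elim X (Sum.elim X' X'') with hYdef
  have hY : ∀ j, Measurable (Y j) := by
    rintro (i | i | i)
    exacts [hmeas i, hmeas' i, hmeas'' i]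
  letI : Fintype ↥A := Fintype.ofFinite _
  letI : Fintype {i : Fin n // i ≠ z ∧ i ∉ A} := Fintype.ofFinite _
  -- components
  set ct : Ω → 𝒳 := X z with hctdef
  set cs : Ω → 𝒳 := X'' z with hcsdef
  set ca : Ω → (↥A → 𝒳) := fun ω i => X i ω with hcadef
  set ca' : Ω → (↥A → 𝒳) := fun ω i => X' i ω with hca'def
  set cr : Ω → ({i : Fin n // i ≠ z ∧ i ∉ A} → 𝒳) := fun ω i => X i.1 ω with hcrdef
  have hctm : Measurable ct := hmeas z
  have hcsm : Measurable cs := hmeas'' z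
  have hcam : Measurable ca := measurable_pi_lambda _ fun i => hmeas i
  have hca'm : Measurable ca' := measurable_pi_lambda _ fun i => hmeas' i
  have hcrm : Measurable cr := measurable_pi_lambda _ fun i => hmeas i.1
  -- measures
  set ν : Measure 𝒳 := P.map (X z) with hνdef
  set α : Measure (↥A → 𝒳) := Measure.pi (fun i => P.map (X i)) with hαdef
  set ρ : Measure ({i : Fin n // i ≠ z ∧ i ∉ A} → 𝒳) := Measure.pi (fun i => P.map (X i.1))
    with hρdef
  haveI : IsProbabilityMeasure ν := Measure.isProbabilityMeasure_map (hmeas z).aemeasurable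
  haveI : ∀ i : ↥A, IsProbabilityMeasure (P.map (X i)) := fun i =>
    Measure.isProbabilityMeasure_map (hmeas i).aemeasurable
  haveI : ∀ i : {i : Fin n // i ≠ z ∧ i ∉ A}, IsProbabilityMeasure (P.map (X i.1)) := fun i =>
    Measure.isProbabilityMeasure_map (hmeas i.1).aemeasurable
  haveI : IsProbabilityMeasure α := by rw [hαdef]; infer_instance
  haveI : IsProbabilityMeasure ρ := by rw [hρdef]; infer_instance
  -- marginal laws
  have law_ca : P.map ca = α :=
    law_tuple Y hY hindep (fun i : ↥A => Sum.inl i.1)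
      (fun i j h => Subtype.ext (by simpa using h))
  have law_ca' : P.map ca' = α := by
    have h0 := law_tuple Y hY hindep (fun i : ↥A => Sum.inr (Sum.inl i.1))
      (fun i j h => Subtype.ext (by simpa using h))
    rw [hαdef]
    refine h0.trans (congrArg Measure.pi (funext fun k => ?_))
    exact (hid k).map_eq
  have law_cr : P.map cr = ρ :=
    law_tuple Y hY hindep (fun i : {i : Fin n // i ≠ z ∧ i ∉ A} => Sum.inl i.1)
      (fun i j h => Subtype.ext (by simpa using h))
  have law_cs : P.map cs = ν := (hid' z).map_eq
  -- independence of the blocks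
  set S₁ : Finset (Fin n ⊕ (Fin n ⊕ Fin n)) := Finset.univ.filter
    (fun j => match j with | .inl i => i ≠ z ∧ i ∉ A | _ => False) with hS₁
  set S₂ : Finset (Fin n ⊕ (Fin n ⊕ Fin n)) := {Sum.inl z} with hS₂
  set S₃ : Finset (Fin n ⊕ (Fin n ⊕ Fin n)) := Finset.univ.filter
    (fun j => match j with | .inl i => i ∈ A | .inr (.inr i) => i = z | _ => False) with hS₃
  set S₄ : Finset (Fin n ⊕ (Fin n ⊕ Fin n)) := {Sum.inr (Sum.inr z)} with hS₄
  have hAne : ∀ i : ↥A, (i : Fin n) ≠ z := fun i h => hA (h ▸ i.2)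
  -- membership proofs
  have mem1 : ∀ i : {i : Fin n // i ≠ z ∧ i ∉ A}, Sum.inl i.1 ∈ S₁ := fun i =>
    Finset.mem_filter.mpr ⟨Finset.mem_univ _, i.2⟩
  have mem1c_t : Sum.inl z ∈ S₁ᶜ :=
    Finset.mem_compl.mpr fun hm => ((Finset.mem_filter.mp hm).2).1 rfl
  have mem1c_s : Sum.inr (Sum.inr z) ∈ S₁ᶜ :=
    Finset.mem_compl.mpr fun hm => (Finset.mem_filter.mp hm).2
  have mem1c_a : ∀ i : ↥A, Sum.inl i.1 ∈ S₁ᶜ := fun i =>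
    Finset.mem_compl.mpr fun hm => ((Finset.mem_filter.mp hm).2).2 i.2
  have mem1c_a' : ∀ i : ↥A, Sum.inr (Sum.inl i.1) ∈ S₁ᶜ := fun i =>
    Finset.mem_compl.mpr fun hm => (Finset.mem_filter.mp hm).2
  have mem2 : Sum.inl z ∈ S₂ := Finset.mem_singleton_self _
  have mem2c_s : Sum.inr (Sum.inr z) ∈ S₂ᶜ := Finset.mem_compl.mpr (by simp [hS₂])
  have mem2c_a : ∀ i : ↥A, Sum.inl i.1 ∈ S₂ᶜ := fun i =>
    Finset.mem_compl.mpr fun hm => hAne i (Sum.inl.inj (Finset.mem_singleton.mp hm))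
  have mem2c_a' : ∀ i : ↥A, Sum.inr (Sum.inl i.1) ∈ S₂ᶜ :=
    fun i => Finset.mem_compl.mpr (by simp [hS₂])
  have mem3_s : Sum.inr (Sum.inr z) ∈ S₃ :=
    Finset.mem_filter.mpr ⟨Finset.mem_univ _, rfl⟩
  have mem3_a : ∀ i : ↥A, Sum.inl i.1 ∈ S₃ := fun i =>
    Finset.mem_filter.mpr ⟨Finset.mem_univ _, i.2⟩
  have mem3c_a' : ∀ i : ↥A, Sum.inr (Sum.inl i.1) ∈ S₃ᶜ := fun i =>
    Finset.mem_compl.mpr fun hm => (Finset.mem_filter.mp hm).2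
  have mem4 : Sum.inr (Sum.inr z) ∈ S₄ := Finset.mem_singleton_self _
  have mem4c_a : ∀ i : ↥A, Sum.inl i.1 ∈ S₄ᶜ :=
    fun i => Finset.mem_compl.mpr (by simp [hS₄])
  have L1 : IndepFun cr (fun ω => (ct ω, ((cs ω, ca ω), ca' ω))) P := by
    have base := hindep.indepFun_finset S₁ S₁ᶜ disjoint_compl_right hY
    exact base.comp
      (φ := fun v : ({x // x ∈ S₁} → 𝒳) => fun i : {i : Fin n // i ≠ z ∧ i ∉ A} =>
        v ⟨Sum.inl i.1, mem1 i⟩)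
      (ψ := fun v : ({x // x ∈ S₁ᶜ} → 𝒳) =>
        (v ⟨Sum.inl z, mem1c_t⟩, ((v ⟨Sum.inr (Sum.inr z), mem1c_s⟩,
          fun i : ↥A => v ⟨Sum.inl i.1, mem1c_a i⟩),
          fun i : ↥A => v ⟨Sum.inr (Sum.inl i.1), mem1c_a' i⟩)))
      (measurable_pi_lambda _ fun i => measurable_pi_apply _)
      (((measurable_pi_apply _).prodMk (((measurable_pi_apply _).prodMk
        (measurable_pi_lambda _ fun i => measurable_pi_apply _)).prodMk
        (measurable_pi_lambda _ fun i => measurable_pi_apply _))))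
  have L2 : IndepFun ct (fun ω => ((cs ω, ca ω), ca' ω)) P := by
    have base := hindep.indepFun_finset S₂ S₂ᶜ disjoint_compl_right hY
    exact base.comp
      (φ := fun v : ({x // x ∈ S₂} → 𝒳) => v ⟨Sum.inl z, mem2⟩)
      (ψ := fun v : ({x // x ∈ S₂ᶜ} → 𝒳) =>
        ((v ⟨Sum.inr (Sum.inr z), mem2c_s⟩, fun i : ↥A => v ⟨Sum.inl i.1, mem2c_a i⟩),
          fun i : ↥A => v ⟨Sum.inr (Sum.inl i.1), mem2c_a' i⟩))
      (measurable_pi_apply _)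
      ((((measurable_pi_apply _).prodMk
        (measurable_pi_lambda _ fun i => measurable_pi_apply _)).prodMk
        (measurable_pi_lambda _ fun i => measurable_pi_apply _)))
  have L3 : IndepFun (fun ω => (cs ω, ca ω)) ca' P := by
    have base := hindep.indepFun_finset S₃ S₃ᶜ disjoint_compl_right hY
    exact base.comp
      (φ := fun v : ({x // x ∈ S₃} → 𝒳) =>
        (v ⟨Sum.inr (Sum.inr z), mem3_s⟩, fun i : ↥A => v ⟨Sum.inl i.1, mem3_a i⟩))
      (ψ := fun v : ({x // x ∈ S₃ᶜ} → 𝒳) =>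
        fun i : ↥A => v ⟨Sum.inr (Sum.inl i.1), mem3c_a' i⟩)
      ((measurable_pi_apply _).prodMk (measurable_pi_lambda _ fun i => measurable_pi_apply _))
      (measurable_pi_lambda _ fun i => measurable_pi_apply _)
  have L4 : IndepFun cs ca P := by
    have base := hindep.indepFun_finset S₄ S₄ᶜ disjoint_compl_right hY
    exact base.comp
      (φ := fun v : ({x // x ∈ S₄} → 𝒳) => v ⟨Sum.inr (Sum.inr z), mem4⟩)
      (ψ := fun v : ({x // x ∈ S₄ᶜ} → 𝒳) => fun i : ↥A => v ⟨Sum.inl i.1, mem4c_a i⟩)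
      (measurable_pi_apply _)
      (measurable_pi_lambda _ fun i => measurable_pi_apply _)
  -- joint law
  have m4 : P.map (fun ω => (cs ω, ca ω)) = ν.prod α := by
    rw [(indepFun_iff_map_prod_eq_prod_map_map hcsm.aemeasurable hcam.aemeasurable).mp L4,
      law_cs, law_ca]
  have m3 : P.map (fun ω => ((cs ω, ca ω), ca' ω)) = (ν.prod α).prod α := by
    rw [(indepFun_iff_map_prod_eq_prod_map_map (hcsm.prodMk hcam).aemeasurable
      hca'm.aemeasurable).mp L3, m4, law_ca']
  have m2 : P.map (fun ω => (ct ω, ((cs ω, ca ω), ca' ω))) = ν.prod ((ν.prod α).prod α) := by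
    rw [(indepFun_iff_map_prod_eq_prod_map_map hctm.aemeasurable
      ((hcsm.prodMk hcam).prodMk hca'm).aemeasurable).mp L2, m3]
  have hlaw : P.map (fun ω => (cr ω, (ct ω, ((cs ω, ca ω), ca' ω))))
      = ρ.prod (ν.prod ((ν.prod α).prod α)) := by
    rw [(indepFun_iff_map_prod_eq_prod_map_map hcrm.aemeasurable
      (hctm.prodMk ((hcsm.prodMk hcam).prodMk hca'm)).aemeasurable).mp L1, law_cr, m2]
  -- the assembled function
  set Φ : 𝒳 × ((↥A → 𝒳) × ({i : Fin n // i ≠ z ∧ i ∉ A} → 𝒳)) → ℝ := fun v =>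
    f (fun i => if h : i ∈ A then v.2.1 ⟨i, h⟩ else if h' : i = z then v.1
        else v.2.2 ⟨i, h', h⟩) with hΦdef
  have hΦm : Measurable Φ := by
    rw [hΦdef]
    refine hf.comp (measurable_pi_lambda _ fun i => ?_)
    by_cases h : i ∈ A
    · simp only [dif_pos h]
      exact (measurable_pi_apply _).comp (measurable_fst.comp measurable_snd)
    · by_cases h' : i = z
      · simp only [dif_neg h, dif_pos h']
        exact measurable_fst
      · simp only [dif_neg h, dif_neg h']
        exact (measurable_pi_apply _).comp (measurable_snd.comp measurable_snd)
  have heq1 : ∀ ω, Φ (ct ω, ca ω, cr ω) = f (fun i => X i ω) := by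
    intro ω
    apply congrArg f
    funext i
    by_cases h : i ∈ A
    · simp [hΦdef, hcadef, h]
    · by_cases h' : i = z
      · subst h'; simp [hΦdef, hctdef, h]
      · simp [hΦdef, hcrdef, h, h']
  have heq2 : ∀ ω, Φ (cs ω, ca ω, cr ω) = f (fun i => if i = z then X'' i ω else X i ω) := by
    intro ω
    apply congrArg f
    funext i
    by_cases h : i ∈ A
    · have h' : i ≠ z := fun hiz => hA (hiz ▸ h)
      simp [hΦdef, hcadef, h, h']
    · by_cases h' : i = z
      · subst h'; simp [hΦdef, hcsdef, h]
      · simp [hΦdef, hcrdef, h, h']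
  have heq3 : ∀ ω, Φ (ct ω, ca' ω, cr ω) = f (resample X X' A ω) := by
    intro ω
    apply congrArg f
    funext i
    by_cases h : i ∈ A
    · simp [hΦdef, hca'def, resample, h]
    · by_cases h' : i = z
      · subst h'; simp [hΦdef, hctdef, resample, h]
      · simp [hΦdef, hcrdef, resample, h, h']
  have hL2' : MemLp (fun ω => Φ (ct ω, ca ω, cr ω)) 2 P := by
    have e : (fun ω => Φ (ct ω, ca ω, cr ω)) = fun ω => f (fun i => X i ω) := funext heq1
    rw [e]; exact hL2
  have main := key_ineq P ν α ρ ct cs ca ca' cr hctm hcsm hcam hca'm hcrm hlaw Φ hΦm hL2'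
  have e₁ : ∫ ω, f (fun i => if i = z then X'' i ω else X i ω) * f (resample X X' A ω) ∂P
      = ∫ ω, Φ (cs ω, ca ω, cr ω) * Φ (ct ω, ca' ω, cr ω) ∂P :=
    integral_congr_ae (Filter.Eventually.of_forall fun ω => by simp only [← heq2, ← heq3])
  have e₂ : ∫ ω, f (fun i => X i ω) * f (resample X X' A ω) ∂P
      = ∫ ω, Φ (ct ω, ca ω, cr ω) * Φ (ct ω, ca' ω, cr ω) ∂P :=
    integral_congr_ae (Filter.Eventually.of_forall fun ω => by simp only [← heq1, ← heq3])
  rw [e₁, e₂]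
  exact main
end
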